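/- The function p(t) := (2/π) ln|coth(πt/2)| is a probability density function on ℝ, i.e., p(t) ≥ 0 for all t ≠ 0 and ∫_ℝ p(t) dt = 1. -/

import Mathlib

open MeasureTheory

open Real Set

noncomputable def hptG : ℝ → ℝ :=
  fun t => Real.log |Real.cosh (Real.pi * t / 2) / Real.sinh (Real.pi * t / 2)|

lemma hptG_even (t : ℝ) : hptG (-t) = hptG t := by
  unfold hptG
  rw [show Real.pi * (-t) / 2 = -(Real.pi * t / 2) by ring]
  simp [Real.cosh_neg, Real.sinh_neg, div_neg, abs_neg]

lemma hptG_key {t : ℝ} (ht : 0 < t) :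
    hptG t = Real.log (1 + Real.exp (-(Real.pi * t))) -
      Real.log (1 - Real.exp (-(Real.pi * t))) := by
  set s := Real.pi * t / 2 with hs
  have hspos : 0 < s := by positivity
  have hsinh : 0 < Real.sinh s := Real.sinh_pos_iff.mpr hspos
  have hu : Real.exp (-(Real.pi * t)) = Real.exp (-s) * Real.exp (-s) := by
    rw [← Real.exp_add]; congr 1; rw [hs]; ring
  have hu1 : Real.exp (-(Real.pi * t)) < 1 := by
    rw [Real.exp_lt_one_iff]
    have : 0 < Real.pi * t := by positivity
    linarith
  have hu0 : 0 < Real.exp (-(Real.pi * t)) := Real.exp_pos _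
  have hdiv : Real.cosh s / Real.sinh s =
      (1 + Real.exp (-(Real.pi * t))) / (1 - Real.exp (-(Real.pi * t))) := by
    rw [Real.cosh_eq, Real.sinh_eq, hu]
    have h1 : Real.exp s ≠ 0 := (Real.exp_pos s).ne'
    have h2 : Real.exp s - Real.exp (-s) ≠ 0 := by
      have := Real.sinh_eq s ▸ hsinh
      intro h; rw [h] at this; norm_num at this
    have h3 : 1 - Real.exp (-s) * Real.exp (-s) ≠ 0 := by
      rw [← hu]; exact (sub_pos.mpr hu1).ne'
    rw [Real.exp_neg] at *
    field_simp
  unfold hptG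
  rw [← hs, abs_of_pos (div_pos (Real.cosh_pos s) hsinh), hdiv,
    Real.log_div (by positivity) (sub_pos.mpr hu1).ne']

noncomputable def hptF : ℕ → ℝ → ℝ :=
  fun k t => 2 * (1 / (2 * (k : ℝ) + 1)) * Real.exp (-(Real.pi * t)) ^ (2 * k + 1)

lemma hptF_nonneg (k : ℕ) (t : ℝ) : 0 ≤ hptF k t := by
  unfold hptF; positivity

lemma hptF_hasSum {t : ℝ} (ht : 0 < t) : HasSum (fun k => hptF k t) (hptG t) := by
  have h1 : |Real.exp (-(Real.pi * t))| < 1 := by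
    rw [abs_of_pos (Real.exp_pos _), Real.exp_lt_one_iff]
    have : 0 < Real.pi * t := by positivity
    linarith
  have := Real.hasSum_log_sub_log_of_abs_lt_one h1
  rwa [← hptG_key ht] at this

lemma hptF_eq (k : ℕ) (t : ℝ) :
    hptF k t = 2 * (1 / (2 * (k : ℝ) + 1)) *
      Real.exp (-(((2 * (k : ℝ) + 1) * Real.pi) * t)) := by
  unfold hptF
  rw [← Real.exp_nat_mul]
  congr 1
  push_cast
  ring

lemma hptF_integrableOn (k : ℕ) : IntegrableOn (hptF k) (Ioi 0) := by
  have hc : 0 < (2 * (k : ℝ) + 1) * Real.pi := by positivity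
  have h0 := (exp_neg_integrableOn_Ioi 0 hc).const_mul (2 * (1 / (2 * (k : ℝ) + 1)))
  refine IntegrableOn.congr_fun h0 (fun t _ => ?_) measurableSet_Ioi
  rw [hptF_eq]
  congr 1
  ring

lemma hptF_integral (k : ℕ) :
    ∫ t in Ioi (0:ℝ), hptF k t = (2 / Real.pi) * (1 / (2 * (k : ℝ) + 1) ^ 2) := by
  have hc : 0 < (2 * (k : ℝ) + 1) * Real.pi := by positivity
  have h1 := integral_comp_mul_left_Ioi (fun x => Real.exp (-x)) 0 hc
  simp only [mul_zero, integral_exp_neg_Ioi_zero, smul_eq_mul, mul_one] at h1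
  have h2 : ∀ t : ℝ, hptF k t =
      2 * (1 / (2 * (k : ℝ) + 1)) * Real.exp (-(((2 * (k : ℝ) + 1) * Real.pi) * t)) :=
    hptF_eq k
  rw [MeasureTheory.integral_congr_ae (ae_of_all _ h2), MeasureTheory.integral_const_mul, h1]
  have hk : (2 * (k : ℝ) + 1) ≠ 0 := by positivity
  field_simp

lemma hptOddZeta : HasSum (fun k : ℕ => 1 / (2 * (k : ℝ) + 1) ^ 2) (Real.pi ^ 2 / 8) := by
  set f : ℕ → ℝ := fun n => 1 / (n : ℝ) ^ 2 with hfdef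
  have htot : HasSum f (Real.pi ^ 2 / 6) := hasSum_zeta_two
  have hf : Summable f := (Real.summable_one_div_nat_pow).mpr one_lt_two
  have hinj : Function.Injective (fun k : ℕ => 2 * k + 1) := fun a b h => by
    dsimp at h; omega
  have hoddS : Summable (fun k : ℕ => f (2 * k + 1)) := hf.comp_injective hinj
  have heven : HasSum (fun k : ℕ => f (2 * k)) (Real.pi ^ 2 / 6 / 4) := by
    have h4 := htot.mul_left (4⁻¹)
    have heq : (fun n : ℕ => (4:ℝ)⁻¹ * f n) = fun k : ℕ => f (2 * k) := by
      funext n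
      simp only [hfdef]
      push_cast
      rw [mul_pow, one_div, one_div, mul_inv]
      norm_num
    rw [heq] at h4
    convert h4 using 1
    rfl
    ring
  have hcomb := heven.even_add_odd hoddS.hasSum
  have huniq := hcomb.unique htot
  have hval : ∑' k : ℕ, f (2 * k + 1) = Real.pi ^ 2 / 8 := by linarith
  have hodd := hval ▸ hoddS.hasSum
  have heq2 : (fun k : ℕ => f (2 * k + 1)) = fun k : ℕ => 1 / (2 * (k : ℝ) + 1) ^ 2 := by
    funext k; simp only [hfdef]; push_cast; ring
  rwa [heq2] at hodd

lemma hptSumVal : HasSum (fun k : ℕ => (2 / Real.pi) * (1 / (2 * (k : ℝ) + 1) ^ 2))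
    (Real.pi / 4) := by
  have := hptOddZeta.mul_left (2 / Real.pi)
  convert this using 1
  rfl
  field_simp
  ring

lemma hptG_measurable : Measurable hptG := by
  unfold hptG
  apply Real.measurable_log.comp
  apply Measurable.abs
  exact ((Real.continuous_cosh.comp (by continuity)).measurable).div
    ((Real.continuous_sinh.comp (by continuity)).measurable)

lemma hptSummableIntNorms :
    Summable (fun k : ℕ => ∫ t in Ioi (0:ℝ), ‖hptF k t‖) := by
  have heq : (fun k : ℕ => ∫ t in Ioi (0:ℝ), ‖hptF k t‖) =
      fun k : ℕ => (2 / Real.pi) * (1 / (2 * (k : ℝ) + 1) ^ 2) := by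
    funext k
    rw [← hptF_integral k]
    apply MeasureTheory.integral_congr_ae (ae_of_all _ ?_)
    intro t
    exact Real.norm_of_nonneg (hptF_nonneg k t)
  rw [heq]
  exact hptSumVal.summable

lemma hptG_integral_Ioi : ∫ t in Ioi (0:ℝ), hptG t = Real.pi / 4 := by
  have h1 := MeasureTheory.integral_tsum_of_summable_integral_norm
    (μ := (volume : Measure ℝ).restrict (Ioi 0)) hptF_integrableOn hptSummableIntNorms
  have h2 : ∫ t in Ioi (0:ℝ), (∑' k, hptF k t) = ∫ t in Ioi (0:ℝ), hptG t := by
    apply setIntegral_congr_fun measurableSet_Ioi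
    intro t ht
    exact (hptF_hasSum ht).tsum_eq
  have h3 : ∑' k : ℕ, ∫ t in Ioi (0:ℝ), hptF k t = Real.pi / 4 := by
    rw [tsum_congr (fun k => hptF_integral k)]
    exact hptSumVal.tsum_eq
  rw [← h2, ← h1, h3]

lemma hptG_integrableOn_Ioi : IntegrableOn hptG (Ioi 0) := by
  refine ⟨hptG_measurable.aestronglyMeasurable, ?_⟩
  have hnn : 0 ≤ᵐ[(volume : Measure ℝ).restrict (Ioi 0)] hptG := by
    filter_upwards [ae_restrict_mem measurableSet_Ioi] with t ht
    exact (hptF_hasSum ht).nonneg (fun k => hptF_nonneg k t)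
  rw [hasFiniteIntegral_iff_ofReal hnn]
  have hpt : ∀ t ∈ Ioi (0:ℝ), ENNReal.ofReal (hptG t) = ∑' k, ENNReal.ofReal (hptF k t) := by
    intro t ht
    rw [← (hptF_hasSum ht).tsum_eq,
      ENNReal.ofReal_tsum_of_nonneg (fun k => hptF_nonneg k t) (hptF_hasSum ht).summable]
  rw [setLIntegral_congr_fun measurableSet_Ioi hpt]
  rw [lintegral_tsum (f := fun (k : ℕ) (t : ℝ) => ENNReal.ofReal (hptF k t))
    (fun k => ((by unfold hptF; fun_prop : Measurable (hptF k)).ennreal_ofReal).aemeasurable)]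
  have hterm : ∀ k : ℕ, ∫⁻ t in Ioi (0:ℝ), ENNReal.ofReal (hptF k t) =
      ENNReal.ofReal ((2 / Real.pi) * (1 / (2 * (k : ℝ) + 1) ^ 2)) := by
    intro k
    rw [← MeasureTheory.ofReal_integral_eq_lintegral_ofReal (hptF_integrableOn k)
      (ae_of_all _ (hptF_nonneg k)), hptF_integral k]
  rw [tsum_congr hterm, ← ENNReal.ofReal_tsum_of_nonneg
    (fun k => by positivity) hptSumVal.summable]
  exact ENNReal.ofReal_lt_top

lemma hptG_integrable : Integrable hptG := by
  have hIic : IntegrableOn hptG (Iic 0) := by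
    rw [← Measure.map_neg_eq_self (volume : Measure ℝ)]
    have m : MeasurableEmbedding fun x : ℝ => -x := (Homeomorph.neg ℝ).measurableEmbedding
    rw [m.integrableOn_map_iff]
    simp_rw [Function.comp_def, hptG_even, neg_preimage, neg_Iic, neg_zero]
    exact (integrableOn_Ici_iff_integrableOn_Ioi).mpr hptG_integrableOn_Ioi
  have := hIic.union hptG_integrableOn_Ioi
  rwa [Iic_union_Ioi, integrableOn_univ] at this

lemma hptG_integral : ∫ t : ℝ, hptG t = 2 * (Real.pi / 4) := by
  have habs : (fun t : ℝ => hptG t) = fun t : ℝ => hptG |t| := by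
    funext t
    rcases abs_choice t with h | h
    · rw [h]
    · rw [h, hptG_even]
  rw [habs, integral_comp_abs (f := hptG), hptG_integral_Ioi]


/-- The "high-peak tent" function p(t) = (2/π) ln|coth(πt/2)| (with
coth x = cosh x / sinh x) is a probability density on ℝ: it is nonnegative away
from 0, integrable, and integrates to 1. -/
theorem highPeakTent_isProbabilityDensity :
    (∀ t : ℝ, t ≠ 0 →
        0 ≤ (2 / Real.pi) *
            Real.log |Real.cosh (Real.pi * t / 2) / Real.sinh (Real.pi * t / 2)|) ∧
      Integrable (fun t : ℝ => (2 / Real.pi) *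
          Real.log |Real.cosh (Real.pi * t / 2) / Real.sinh (Real.pi * t / 2)|) ∧
      (∫ t : ℝ, (2 / Real.pi) *
          Real.log |Real.cosh (Real.pi * t / 2) / Real.sinh (Real.pi * t / 2)|) = 1 := by
  refine ⟨?_, ?_, ?_⟩
  · intro t ht
    have hpi : (0:ℝ) < Real.pi := Real.pi_pos
    apply mul_nonneg (by positivity)
    apply Real.log_nonneg
    have hs : Real.sinh (Real.pi * t / 2) ≠ 0 := by
      rw [Ne, Real.sinh_eq_zero]
      intro h
      apply ht
      have : Real.pi ≠ 0 := Real.pi_ne_zero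
      field_simp at h
      simpa [this] using h
    rw [abs_div, le_div_iff₀ (abs_pos.mpr hs), one_mul, Real.abs_sinh,
      abs_of_pos (Real.cosh_pos _), ← Real.cosh_abs]
    exact (Real.sinh_lt_cosh _).le
  · exact hptG_integrable.const_mul _
  · rw [MeasureTheory.integral_const_mul]
    have : (∫ t : ℝ, Real.log
        |Real.cosh (Real.pi * t / 2) / Real.sinh (Real.pi * t / 2)|) = 2 * (Real.pi / 4) :=
      hptG_integral
    rw [this]
    have : Real.pi ≠ 0 := Real.pi_ne_zero
    field_simp
    ring
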